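/- For every integer n ≥ 3 there exists an integer S such that for every integer s ≥ S, inf{ t/m : t, m integers with t ≥ m ≥ 1 and C(t+n, n) − s·((t+1)·C(m+n−2, n−1) − (n−1)·C(m+n−2, n)) > 0 } = g_{n,1,s}, where g_{n,1,s} is the unique real root ≥ 1 of the polynomial x^n − n·s·x + (n−1)·s. In other words, e_{n,1,s} = g_{n,1,s} for all sufficiently large s. -/

import Mathlib

open Finset Set

/-- Upper bound for ascending product with offsets 1..k+1. -/
lemma prodUB (x : ℝ) : ∀ k : ℕ, ((k:ℝ)+1)*((k:ℝ)+2) ≤ x →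
    ∏ i ∈ range (k+1), (x + i + 1) ≤ x^(k+1) + ((k:ℝ)+1)*((k:ℝ)+2) * x^k := by
  intro k
  induction k with
  | zero => intro _; simp
  | succ k ih =>
    intro hx
    have hk : ((k:ℝ)+1)*((k:ℝ)+2) ≤ x := by push_cast at hx ⊢; nlinarith [Nat.cast_nonneg (α := ℝ) k]
    have hx0 : (0:ℝ) ≤ x := by nlinarith [Nat.cast_nonneg (α := ℝ) k]
    have h1 := ih hk
    rw [prod_range_succ]
    have hf : (0:ℝ) ≤ x + ((k:ℝ)+1) + 1 := by positivity
    have h2 : (∏ i ∈ range (k+1), (x + i + 1)) * (x + ((k:ℝ)+1) + 1)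
        ≤ (x^(k+1) + ((k:ℝ)+1)*((k:ℝ)+2) * x^k) * (x + ((k:ℝ)+1) + 1) :=
      mul_le_mul_of_nonneg_right h1 hf
    have hxk : (0:ℝ) ≤ x^k := pow_nonneg hx0 k
    have e1 : x^(k+1) = x^k * x := pow_succ x k
    have e2 : x^(k+1+1) = x^k * x * x := by rw [pow_succ, pow_succ]
    push_cast
    push_cast at h2
    refine h2.trans ?_
    rw [e1, e2]
    nlinarith [mul_le_mul_of_nonneg_left hk hxk]

/-- Lower bound for ascending product with offsets 0..k. -/
lemma prodLB (x : ℝ) (hx : 0 ≤ x) : ∀ k : ℕ,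
    x^(k+1) + ((k:ℝ)*((k:ℝ)+1)/2) * x^k ≤ ∏ i ∈ range (k+1), (x + i) := by
  intro k
  induction k with
  | zero => simp
  | succ k ih =>
    rw [prod_range_succ]
    have hf : (0:ℝ) ≤ x + ((k:ℝ)+1) := by positivity
    have h2 : (x^(k+1) + ((k:ℝ)*((k:ℝ)+1)/2) * x^k) * (x + ((k:ℝ)+1))
        ≤ (∏ i ∈ range (k+1), (x + i)) * (x + ((k:ℝ)+1)) :=
      mul_le_mul_of_nonneg_right ih hf
    have hxk : (0:ℝ) ≤ x^k := pow_nonneg hx k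
    have e1 : x^(k+1) = x^k * x := pow_succ x k
    have e2 : x^(k+1+1) = x^k * x * x := by rw [pow_succ, pow_succ]
    push_cast
    push_cast at h2
    refine le_trans ?_ h2
    rw [e1, e2]
    nlinarith [mul_nonneg hxk hx, mul_nonneg (mul_nonneg (Nat.cast_nonneg (α:=ℝ) k) hxk) hx, mul_nonneg (Nat.cast_nonneg (α:=ℝ) k) hxk, mul_nonneg (mul_nonneg (Nat.cast_nonneg (α:=ℝ) k) (Nat.cast_nonneg (α:=ℝ) k)) hxk]

lemma fact_prod (t : ℕ) : ∀ k : ℕ, Nat.factorial t * ∏ i ∈ range k, (t + i + 1) = Nat.factorial (t + k) := by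
  intro k
  induction k with
  | zero => simp
  | succ k ih =>
    rw [prod_range_succ, ← mul_assoc, ih, ← add_assoc]
    rw [Nat.factorial_succ]
    ring

lemma choose_eq_prod (t k : ℕ) :
    Nat.factorial k * (t + k).choose k = ∏ i ∈ range k, (t + i + 1) := by
  have h := Nat.choose_mul_factorial_mul_factorial (Nat.le_add_left k t)
  have h2 : t + k - k = t := by omega
  rw [h2] at h
  have h3 := fact_prod t k
  have := Nat.factorial_pos t
  apply Nat.eq_of_mul_eq_mul_left this
  rw [h3, ← h]
  ring

/-- Key integer identity. -/
lemma key_id (N s m t : ℕ) (hm : 1 ≤ m) :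
    ((Nat.factorial (N+3) : ℤ)) *
      ((Nat.choose (t + (N+3)) (N+3) : ℤ) - (s : ℤ) *
        (((t : ℤ) + 1) * (Nat.choose (m + (N+3) - 2) ((N+3) - 1) : ℤ)
          - (((N+3 : ℕ) : ℤ) - 1) * (Nat.choose (m + (N+3) - 2) (N+3) : ℤ)))
    = (∏ i ∈ range (N+3), ((t:ℤ) + i + 1))
      - (s:ℤ) * (∏ i ∈ range (N+2), ((m:ℤ) + i)) *
        (((N:ℤ)+3) * t - ((N:ℤ)+2) * m + (2*N+5)) := by
  have e1 : m + (N+3) - 2 = m + N + 1 := by omega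
  have e2 : (N+3) - 1 = N + 2 := by omega
  rw [e1, e2]
  -- h1 : (N+3)! * C(t+N+3, N+3) = ∏_{i<N+3} (t+i+1)
  have h1 := choose_eq_prod t (N+3)
  -- h2 : (N+2)! * C(m+N+1, N+2) = ∏_{i<N+2} (m+i)  (using m ≥ 1)
  have h2 : Nat.factorial (N+2) * (m + N + 1).choose (N+2) = ∏ i ∈ range (N+2), (m + i) := by
    have := choose_eq_prod (m-1) (N+2)
    have e3 : m - 1 + (N+2) = m + N + 1 := by omega
    rw [e3] at this
    rw [this]
    refine prod_congr rfl fun i _ => by omega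
  -- h3 : C(m+N+1, N+3) * (N+3) = C(m+N+1, N+2) * (m-1)
  have h3 := Nat.choose_succ_right_eq (m + N + 1) (N+2)
  have e4 : m + N + 1 - (N + 2) = m - 1 := by omega
  rw [e4] at h3
  -- cast to ℤ
  have h1' : (Nat.factorial (N+3) : ℤ) * ((t + (N+3)).choose (N+3) : ℤ)
      = ∏ i ∈ range (N+3), ((t:ℤ) + i + 1) := by
    exact_mod_cast congrArg (Nat.cast (R := ℤ)) h1
  have h2' : (Nat.factorial (N+2) : ℤ) * ((m + N + 1).choose (N+2) : ℤ)
      = ∏ i ∈ range (N+2), ((m:ℤ) + i) := by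
    exact_mod_cast congrArg (Nat.cast (R := ℤ)) h2
  have h3' : ((m + N + 1).choose (N+3) : ℤ) * ((N:ℤ)+3)
      = ((m + N + 1).choose (N+2) : ℤ) * ((m:ℤ) - 1) := by
    have := congrArg (Nat.cast (R := ℤ)) h3
    push_cast [Nat.cast_sub hm] at this
    linarith [this]
  have eF : (Nat.factorial (N+3) : ℤ) = ((N:ℤ)+3) * (Nat.factorial (N+2) : ℤ) := by
    have : Nat.factorial (N+3) = (N+3) * Nat.factorial (N+2) := Nat.factorial_succ (N+2)
    exact_mod_cast congrArg (Nat.cast (R := ℤ)) this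
  push_cast
  linear_combination h1'
    + (-(s:ℤ)*((t:ℤ)+1)*(((m + N + 1).choose (N+2) : ℤ)) + (s:ℤ)*((N:ℤ)+2)*(((m + N + 1).choose (N+3) : ℤ))) * eF
    + ((s:ℤ)*((N:ℤ)+2)*(Nat.factorial (N+2) : ℤ)) * h3'
    - ((s:ℤ)*(((N:ℤ)+3) * t - ((N:ℤ)+2) * m + (2*N+5))) * h2'

lemma phi_convex (N : ℕ) (sR : ℝ) :
    ConvexOn ℝ (Set.Ici 0) (fun x : ℝ => x^(N+3) - ((N:ℝ)+3)*sR*x + ((N:ℝ)+2)*sR) := by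
  have h1 : ConvexOn ℝ (Set.Ici (0:ℝ)) (fun x : ℝ => x^(N+3)) := convexOn_pow (N+3)
  have h2 : ConvexOn ℝ (Set.Ici (0:ℝ)) (fun x : ℝ => -(((N:ℝ)+3)*sR)*x + ((N:ℝ)+2)*sR) := by
    refine ⟨convex_Ici 0, fun x _ y _ a b _ _ hab => le_of_eq ?_⟩
    simp only [smul_eq_mul]
    linear_combination (-(((N:ℝ)+2)*sR)) * hab
  have heq : (fun x : ℝ => x^(N+3) - ((N:ℝ)+3)*sR*x + ((N:ℝ)+2)*sR)
      = (fun x : ℝ => x^(N+3)) + (fun x : ℝ => -(((N:ℝ)+3)*sR)*x + ((N:ℝ)+2)*sR) := by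
    funext x
    simp only [Pi.add_apply]
    ring
  rw [heq]
  exact h1.add h2

lemma g_gt_one (N : ℕ) (sR g : ℝ) (hs2 : 2 ≤ sR) (hg1 : 1 ≤ g)
    (root : g^(N+3) - ((N:ℝ)+3)*sR*g + ((N:ℝ)+2)*sR = 0) : 1 < g := by
  rcases eq_or_lt_of_le hg1 with h | h
  · exfalso
    rw [← h] at root
    simp only [one_pow] at root
    linarith
  · exact h

lemma F2 (N : ℕ) (sR g : ℝ) (hs2 : 2 ≤ sR) (hg1 : 1 ≤ g)
    (root : g^(N+3) - ((N:ℝ)+3)*sR*g + ((N:ℝ)+2)*sR = 0)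
    (x : ℝ) (h1 : 1 ≤ x) (hx : x ≤ g) :
    x^(N+3) ≤ ((N:ℝ)+3)*sR*x - ((N:ℝ)+2)*sR := by
  have hφ := phi_convex N sR
  have hmem1 : (1:ℝ) ∈ Set.Ici (0:ℝ) := by norm_num
  have hmemg : g ∈ Set.Ici (0:ℝ) := by simp; linarith
  have hseg : x ∈ segment ℝ (1:ℝ) g := by
    rw [segment_eq_Icc hg1]; exact ⟨h1, hx⟩
  have := hφ.le_on_segment hmem1 hmemg hseg
  simp only [one_pow] at this
  have hmax : max ((1:ℝ) - ((N:ℝ)+3)*sR*1 + ((N:ℝ)+2)*sR)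
      (g^(N+3) - ((N:ℝ)+3)*sR*g + ((N:ℝ)+2)*sR) ≤ 0 := by
    rw [root]
    apply max_le _ le_rfl
    linarith
  have h2 := le_trans this hmax
  linarith

lemma F3 (N : ℕ) (sR g : ℝ) (hs2 : 2 ≤ sR) (hg1 : 1 ≤ g)
    (root : g^(N+3) - ((N:ℝ)+3)*sR*g + ((N:ℝ)+2)*sR = 0)
    (x : ℝ) (hx : g < x) :
    0 < x^(N+3) - ((N:ℝ)+3)*sR*x + ((N:ℝ)+2)*sR := by
  have hφ := phi_convex N sR
  have hg1' : 1 < g := g_gt_one N sR g hs2 hg1 root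
  have hx1 : (0:ℝ) < x - 1 := by linarith
  set a : ℝ := (x - g)/(x - 1) with ha
  set b : ℝ := (g - 1)/(x - 1) with hb
  have ha0 : 0 < a := div_pos (by linarith) hx1
  have hb0 : 0 < b := div_pos (by linarith) hx1
  have hne : x - 1 ≠ 0 := ne_of_gt hx1
  have hab : a + b = 1 := by
    rw [ha, hb, ← add_div, div_eq_one_iff_eq hne]
    ring
  have hmem1 : (1:ℝ) ∈ Set.Ici (0:ℝ) := by norm_num
  have hmemx : x ∈ Set.Ici (0:ℝ) := by simp; linarith
  have hcomb := hφ.2 hmem1 hmemx ha0.le hb0.le hab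
  try simp only [smul_eq_mul] at hcomb
  have hpt : a * 1 + b * x = g := by
    rw [ha, hb]
    field_simp
    ring
  rw [hpt, one_pow] at hcomb
  rw [root] at hcomb
  nlinarith [hcomb, mul_pos ha0 (show (0:ℝ) < sR - 1 by linarith), hb0]

lemma F4 (N : ℕ) (sR g : ℝ) (hs2 : 2 ≤ sR) (hg1 : 1 ≤ g)
    (root : g^(N+3) - ((N:ℝ)+3)*sR*g + ((N:ℝ)+2)*sR = 0) :
    g^(N+2) ≤ ((N:ℝ)+3)*sR := by
  have hg0 : (0:ℝ) < g := by linarith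
  have h1 : g^(N+2) * g ≤ (((N:ℝ)+3)*sR) * g := by
    rw [← pow_succ]
    nlinarith [root, mul_pos (by linarith : (0:ℝ) < ((N:ℝ)+2)) (by linarith : (0:ℝ) < sR)]
  exact le_of_mul_le_mul_right h1 hg0

lemma F2_scaled (N : ℕ) (sR g : ℝ) (hs2 : 2 ≤ sR) (hg1 : 1 ≤ g)
    (root : g^(N+3) - ((N:ℝ)+3)*sR*g + ((N:ℝ)+2)*sR = 0)
    (mr tr : ℝ) (hm0 : 0 < mr) (hmt : mr ≤ tr) (htg : tr ≤ g * mr) :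
    tr^(N+3) ≤ sR * mr^(N+2) * (((N:ℝ)+3)*tr - ((N:ℝ)+2)*mr) := by
  have hx1 : 1 ≤ tr / mr := (one_le_div hm0).2 hmt
  have hxg : tr / mr ≤ g := (div_le_iff₀ hm0).2 (by linarith)
  have h := F2 N sR g hs2 hg1 root (tr/mr) hx1 hxg
  have htr : tr = (tr/mr) * mr := by field_simp
  have hmp : (0:ℝ) < mr^(N+3) := pow_pos hm0 _
  have h2 : (tr/mr)^(N+3) * mr^(N+3) ≤ (((N:ℝ)+3)*sR*(tr/mr) - ((N:ℝ)+2)*sR) * mr^(N+3) :=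
    mul_le_mul_of_nonneg_right h hmp.le
  calc tr^(N+3) = (tr/mr)^(N+3) * mr^(N+3) := by rw [← mul_pow, ← htr]
    _ ≤ (((N:ℝ)+3)*sR*(tr/mr) - ((N:ℝ)+2)*sR) * mr^(N+3) := h2
    _ = sR * mr^(N+2) * (((N:ℝ)+3)*((tr/mr)*mr) - ((N:ℝ)+2)*mr) := by rw [pow_succ]; ring
    _ = sR * mr^(N+2) * (((N:ℝ)+3)*tr - ((N:ℝ)+2)*mr) := by rw [← htr]

lemma sbig (N s : ℕ) (hs : (N+3)^(4*(N+3)) ≤ s) : 2 ≤ s := by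
  calc 2 ≤ N+3 := by omega
    _ ≤ (N+3)^(4*(N+3)) := Nat.le_self_pow (by positivity) _
    _ ≤ s := hs

set_option maxHeartbeats 2000000 in
lemma partA (N s m t : ℕ) (g : ℝ)
    (hs : (N+3)^(4*(N+3)) ≤ s) (hm : 1 ≤ m) (hmt : m ≤ t) (hg1 : 1 ≤ g)
    (root : g^(N+3) - ((N:ℝ)+3)*(s:ℝ)*g + ((N:ℝ)+2)*(s:ℝ) = 0)
    (hlt : (t:ℝ) < g * m) :
    (∏ i ∈ range (N+3), ((t:ℝ) + i + 1)) ≤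
      (s:ℝ) * (∏ i ∈ range (N+2), ((m:ℝ) + i)) *
        (((N:ℝ)+3)*t - ((N:ℝ)+2)*m + (2*(N:ℝ)+5)) := by
  have hs2 : (2:ℝ) ≤ (s:ℝ) := by exact_mod_cast sbig N s hs
  have hsbig : ((N:ℝ)+3)^(4*(N+3)) ≤ (s:ℝ) := by exact_mod_cast hs
  have hm1 : (1:ℝ) ≤ (m:ℝ) := by exact_mod_cast hm
  have hmt' : (m:ℝ) ≤ (t:ℝ) := by exact_mod_cast hmt
  have hm0 : (0:ℝ) < (m:ℝ) := by linarith
  have ht0 : (0:ℝ) ≤ (t:ℝ) := by linarith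
  have hN0 : (0:ℝ) ≤ (N:ℝ) := Nat.cast_nonneg N
  have hs0 : (0:ℝ) ≤ (s:ℝ) := by linarith
  have hB0 : (0:ℝ) ≤ ∏ i ∈ range (N+2), ((m:ℝ) + i) :=
    prod_nonneg fun i _ => by positivity
  have hBlow : (m:ℝ)^(N+2) ≤ ∏ i ∈ range (N+2), ((m:ℝ) + i) := by
    calc (m:ℝ)^(N+2) = ∏ _i ∈ range (N+2), (m:ℝ) := by rw [prod_const, card_range]
      _ ≤ ∏ i ∈ range (N+2), ((m:ℝ) + i) :=
        prod_le_prod (fun i _ => hm0.le)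
          (fun i _ => le_add_of_nonneg_right (Nat.cast_nonneg i))
  have hNt : (N:ℝ)*(m:ℝ) ≤ (N:ℝ)*(t:ℝ) := mul_le_mul_of_nonneg_left hmt' hN0
  have hRm : (m:ℝ) ≤ ((N:ℝ)+3)*t - ((N:ℝ)+2)*m + (2*(N:ℝ)+5) := by nlinarith
  have hR0 : (0:ℝ) ≤ ((N:ℝ)+3)*t - ((N:ℝ)+2)*m + (2*(N:ℝ)+5) := by linarith
  by_cases hcase : (t:ℝ) ≤ ((N:ℝ)+3)*((N:ℝ)+4)*m
  · -- bounded ratio case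
    have hA1 : (∏ i ∈ range (N+3), ((t:ℝ) + i + 1)) ≤ ((t:ℝ) + ((N:ℝ)+3))^(N+3) := by
      calc (∏ i ∈ range (N+3), ((t:ℝ) + i + 1))
          ≤ ∏ _i ∈ range (N+3), ((t:ℝ) + ((N:ℝ)+3)) := by
            refine prod_le_prod (fun i _ => by positivity) (fun i hi => ?_)
            have h1 : i ≤ N + 2 := by have := mem_range.1 hi; omega
            have h2 : (i:ℝ) ≤ (N:ℝ)+2 := by exact_mod_cast h1
            linarith
        _ = ((t:ℝ) + ((N:ℝ)+3))^(N+3) := by rw [prod_const, card_range]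
    have hNm : ((N:ℝ)+3)*1 ≤ ((N:ℝ)+3)*m :=
      mul_le_mul_of_nonneg_left hm1 (by linarith)
    have h2 : (t:ℝ) + ((N:ℝ)+3) ≤ ((N:ℝ)+3)*((N:ℝ)+5)*m := by nlinarith
    have h3 : ((t:ℝ) + ((N:ℝ)+3))^(N+3) ≤ (((N:ℝ)+3)*((N:ℝ)+5))^(N+3) * (m:ℝ)^(N+3) := by
      rw [← mul_pow]
      exact pow_le_pow_left₀ (by positivity) h2 _
    have h4n : ((N+3)*(N+5))^(N+3) ≤ (N+3)^(4*(N+3)) := by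
      have h5 : N+5 ≤ (N+3)^2 := by
        calc N+5 ≤ N*N + 6*N + 9 := by omega
          _ = (N+3)^2 := by ring
      calc ((N+3)*(N+5))^(N+3) ≤ ((N+3)*(N+3)^2)^(N+3) :=
            Nat.pow_le_pow_left (Nat.mul_le_mul_left _ h5) _
        _ = (N+3)^(3*(N+3)) := by rw [← pow_succ', ← pow_mul]
        _ ≤ (N+3)^(4*(N+3)) := Nat.pow_le_pow_right (by omega) (by omega)
    have h4 : (((N:ℝ)+3)*((N:ℝ)+5))^(N+3) ≤ (s:ℝ) := by
      have := (Nat.cast_le (α := ℝ)).2 h4n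
      push_cast at this
      linarith
    have h5 : (∏ i ∈ range (N+3), ((t:ℝ) + i + 1)) ≤ (s:ℝ) * (m:ℝ)^(N+3) := by
      calc (∏ i ∈ range (N+3), ((t:ℝ) + i + 1))
          ≤ (((N:ℝ)+3)*((N:ℝ)+5))^(N+3) * (m:ℝ)^(N+3) := hA1.trans h3
        _ ≤ (s:ℝ) * (m:ℝ)^(N+3) := mul_le_mul_of_nonneg_right h4 (by positivity)
    refine h5.trans ?_
    have e : (s:ℝ) * (m:ℝ)^(N+3) = (s:ℝ) * (m:ℝ)^(N+2) * (m:ℝ) := by rw [pow_succ]; ring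
    rw [e]
    calc (s:ℝ) * (m:ℝ)^(N+2) * (m:ℝ)
        ≤ (s:ℝ) * (∏ i ∈ range (N+2), ((m:ℝ) + i)) * (m:ℝ) :=
          mul_le_mul_of_nonneg_right (mul_le_mul_of_nonneg_left hBlow hs0) hm0.le
      _ ≤ (s:ℝ) * (∏ i ∈ range (N+2), ((m:ℝ) + i)) *
            (((N:ℝ)+3)*t - ((N:ℝ)+2)*m + (2*(N:ℝ)+5)) :=
          mul_le_mul_of_nonneg_left hRm (by positivity)
  · -- large ratio case
    push_neg at hcase
    have hNNm : ((N:ℝ)+3)*((N:ℝ)+4)*1 ≤ ((N:ℝ)+3)*((N:ℝ)+4)*m :=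
      mul_le_mul_of_nonneg_left hm1 (by positivity)
    have htbig : ((N:ℝ)+3)*((N:ℝ)+4) ≤ (t:ℝ) := by nlinarith
    have hA : (∏ i ∈ range (N+3), ((t:ℝ) + i + 1))
        ≤ (t:ℝ)^(N+3) + ((N:ℝ)+3)*((N:ℝ)+4)*(t:ℝ)^(N+2) := by
      have h := prodUB (t:ℝ) (N+2) (by push_cast; linarith)
      push_cast at h
      linarith
    have htD : (t:ℝ) ≤ ((N:ℝ)+3)*t - ((N:ℝ)+2)*m := by nlinarith
    have hD0 : (0:ℝ) ≤ ((N:ℝ)+3)*t - ((N:ℝ)+2)*m := le_trans ht0 htD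
    have hDR : ((N:ℝ)+3)*t - ((N:ℝ)+2)*m
        ≤ ((N:ℝ)+3)*t - ((N:ℝ)+2)*m + (2*(N:ℝ)+5) := by linarith
    have h1 : (t:ℝ)^(N+3) ≤ (s:ℝ) * (m:ℝ)^(N+2) * (((N:ℝ)+3)*t - ((N:ℝ)+2)*m) :=
      F2_scaled N (s:ℝ) g hs2 hg1 root (m:ℝ) (t:ℝ) hm0 hmt' (le_of_lt hlt)
    have hg0 : (0:ℝ) < g := by linarith
    have hF4 := F4 N (s:ℝ) g hs2 hg1 root
    have h2a : ((N:ℝ)+3)*((N:ℝ)+4)*g^(N+1) ≤ (s:ℝ) := by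
      have hnat : ((N+3)*(N+4))^(N+2)*(N+3)^(N+1) ≤ (N+3)^(4*(N+3)) := by
        have h5 : N+4 ≤ (N+3)^2 := by
          calc N+4 ≤ N*N + 6*N + 9 := by omega
            _ = (N+3)^2 := by ring
        calc ((N+3)*(N+4))^(N+2)*(N+3)^(N+1)
            ≤ ((N+3)*(N+3)^2)^(N+2)*(N+3)^(N+1) :=
              Nat.mul_le_mul_right _ (Nat.pow_le_pow_left (Nat.mul_le_mul_left _ h5) _)
          _ = (N+3)^(3*(N+2)+(N+1)) := by rw [← pow_succ', ← pow_mul, ← pow_add]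
          _ ≤ (N+3)^(4*(N+3)) := Nat.pow_le_pow_right (by omega) (by omega)
      have hnatR : (((N:ℝ)+3)*((N:ℝ)+4))^(N+2)*((N:ℝ)+3)^(N+1) ≤ (s:ℝ) := by
        have := (Nat.cast_le (α := ℝ)).2 hnat
        push_cast at this
        linarith
      have hpow : (((N:ℝ)+3)*((N:ℝ)+4)*g^(N+1))^(N+2) ≤ (s:ℝ)^(N+2) := by
        have e1 : (((N:ℝ)+3)*((N:ℝ)+4)*g^(N+1))^(N+2)
            = (((N:ℝ)+3)*((N:ℝ)+4))^(N+2) * (g^(N+2))^(N+1) := by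
          rw [mul_pow, ← pow_mul, ← pow_mul, Nat.mul_comm (N+1) (N+2)]
        rw [e1]
        have h2 : (g^(N+2))^(N+1) ≤ (((N:ℝ)+3)*(s:ℝ))^(N+1) :=
          pow_le_pow_left₀ (by positivity) hF4 _
        calc (((N:ℝ)+3)*((N:ℝ)+4))^(N+2) * (g^(N+2))^(N+1)
            ≤ (((N:ℝ)+3)*((N:ℝ)+4))^(N+2) * (((N:ℝ)+3)*(s:ℝ))^(N+1) :=
              mul_le_mul_of_nonneg_left h2 (by positivity)
          _ = (((N:ℝ)+3)*((N:ℝ)+4))^(N+2)*((N:ℝ)+3)^(N+1) * (s:ℝ)^(N+1) := by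
              rw [mul_pow ((N:ℝ)+3) (s:ℝ) (N+1)]; ring
          _ ≤ (s:ℝ) * (s:ℝ)^(N+1) := mul_le_mul_of_nonneg_right hnatR (by positivity)
          _ = (s:ℝ)^(N+2) := by rw [← pow_succ']
      exact le_of_pow_le_pow_left₀ (by omega) hs0 hpow
    have hT1 : (1:ℝ) ≤ ((N:ℝ)+1)*((N:ℝ)+2)/2 := by nlinarith
    have h2 : ((N:ℝ)+3)*((N:ℝ)+4)*(t:ℝ)^(N+2)
        ≤ (s:ℝ) * (((N:ℝ)+1)*((N:ℝ)+2)/2) * (m:ℝ)^(N+1) * (((N:ℝ)+3)*t - ((N:ℝ)+2)*m) := by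
      have h2b : (t:ℝ)^(N+1) ≤ g^(N+1) * (m:ℝ)^(N+1) := by
        rw [← mul_pow]
        exact pow_le_pow_left₀ ht0 (le_of_lt hlt) _
      have c1 : ((N:ℝ)+3)*((N:ℝ)+4)*(t:ℝ)^(N+2)
          ≤ ((N:ℝ)+3)*((N:ℝ)+4)*g^(N+1)*(m:ℝ)^(N+1)*(t:ℝ) := by
        have e1 : (t:ℝ)^(N+2) = (t:ℝ)^(N+1) * (t:ℝ) := by rw [pow_succ]
        rw [e1]
        have := mul_le_mul_of_nonneg_right h2b ht0
        nlinarith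
      have c2 : ((N:ℝ)+3)*((N:ℝ)+4)*g^(N+1)*(m:ℝ)^(N+1)*(t:ℝ)
          ≤ (s:ℝ) * (m:ℝ)^(N+1) * (t:ℝ) := by
        have := mul_le_mul_of_nonneg_right h2a
          (mul_nonneg (pow_nonneg hm0.le (N+1)) ht0)
        calc ((N:ℝ)+3)*((N:ℝ)+4)*g^(N+1)*(m:ℝ)^(N+1)*(t:ℝ)
            = (((N:ℝ)+3)*((N:ℝ)+4)*g^(N+1)) * ((m:ℝ)^(N+1)*(t:ℝ)) := by ring
          _ ≤ (s:ℝ) * ((m:ℝ)^(N+1)*(t:ℝ)) := this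
          _ = (s:ℝ) * (m:ℝ)^(N+1) * (t:ℝ) := by ring
      have c3 : (s:ℝ) * (m:ℝ)^(N+1) * (t:ℝ)
          ≤ (s:ℝ) * (((N:ℝ)+1)*((N:ℝ)+2)/2) * (m:ℝ)^(N+1) * (((N:ℝ)+3)*t - ((N:ℝ)+2)*m) := by
        have h1' : (s:ℝ) * (m:ℝ)^(N+1) * (t:ℝ)
            ≤ (s:ℝ) * (m:ℝ)^(N+1) * (((N:ℝ)+3)*t - ((N:ℝ)+2)*m) :=
          mul_le_mul_of_nonneg_left htD (by positivity)
        have hsm0 : (0:ℝ) ≤ (s:ℝ) * (m:ℝ)^(N+1) * (((N:ℝ)+3)*t - ((N:ℝ)+2)*m) := by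
          positivity
        nlinarith
      linarith
    have hBlow2 : (m:ℝ)^(N+2) + (((N:ℝ)+1)*((N:ℝ)+2)/2)*(m:ℝ)^(N+1)
        ≤ ∏ i ∈ range (N+2), ((m:ℝ) + i) := by
      have h := prodLB (m:ℝ) hm0.le (N+1)
      push_cast at h
      linarith
    calc (∏ i ∈ range (N+3), ((t:ℝ) + i + 1))
        ≤ (t:ℝ)^(N+3) + ((N:ℝ)+3)*((N:ℝ)+4)*(t:ℝ)^(N+2) := hA
      _ ≤ (s:ℝ) * (m:ℝ)^(N+2) * (((N:ℝ)+3)*t - ((N:ℝ)+2)*m)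
          + (s:ℝ) * (((N:ℝ)+1)*((N:ℝ)+2)/2) * (m:ℝ)^(N+1) * (((N:ℝ)+3)*t - ((N:ℝ)+2)*m) :=
          add_le_add h1 h2
      _ = (s:ℝ) * ((m:ℝ)^(N+2) + (((N:ℝ)+1)*((N:ℝ)+2)/2)*(m:ℝ)^(N+1))
            * (((N:ℝ)+3)*t - ((N:ℝ)+2)*m) := by ring
      _ ≤ (s:ℝ) * (∏ i ∈ range (N+2), ((m:ℝ) + i)) * (((N:ℝ)+3)*t - ((N:ℝ)+2)*m) :=
          mul_le_mul_of_nonneg_right (mul_le_mul_of_nonneg_left hBlow2 hs0) hD0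
      _ ≤ (s:ℝ) * (∏ i ∈ range (N+2), ((m:ℝ) + i)) *
            (((N:ℝ)+3)*t - ((N:ℝ)+2)*m + (2*(N:ℝ)+5)) :=
          mul_le_mul_of_nonneg_left hDR (by positivity)

set_option maxHeartbeats 1000000 in
lemma partB (N s : ℕ) (g : ℝ) (hs2n : 2 ≤ s) (hg1 : 1 ≤ g)
    (root : g^(N+3) - ((N:ℝ)+3)*(s:ℝ)*g + ((N:ℝ)+2)*(s:ℝ) = 0)
    (ε : ℝ) (hε : 0 < ε) :
    ∃ t m : ℕ, 1 ≤ m ∧ m ≤ t ∧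
      (s:ℝ) * (∏ i ∈ range (N+2), ((m:ℝ) + i)) *
          (((N:ℝ)+3)*t - ((N:ℝ)+2)*m + (2*(N:ℝ)+5))
        < (∏ i ∈ range (N+3), ((t:ℝ) + i + 1)) ∧
      (t:ℝ)/(m:ℝ) < g + ε := by
  have hs2 : (2:ℝ) ≤ (s:ℝ) := by exact_mod_cast hs2n
  have hs0 : (0:ℝ) ≤ (s:ℝ) := by linarith
  have hN0 : (0:ℝ) ≤ (N:ℝ) := Nat.cast_nonneg N
  set lam : ℝ := g + ε/2 with hlam
  have hglam : g < lam := by rw [hlam]; linarith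
  have hlam1 : 1 < lam := by linarith
  have hlam0 : 0 < lam := by linarith
  have hδ0 : 0 < lam^(N+3) - (((N:ℝ)+3)*(s:ℝ)*lam - ((N:ℝ)+2)*(s:ℝ)) := by
    have := F3 N (s:ℝ) g hs2 hg1 root lam hglam
    linarith
  set A0 : ℝ := ((N:ℝ)+3)*lam - ((N:ℝ)+2) with hA0def
  have hA00 : 0 < A0 := by rw [hA0def]; nlinarith
  set K : ℝ := ((N:ℝ)+2)*((N:ℝ)+3) with hKdef
  have hK0 : 0 < K := by rw [hKdef]; nlinarith
  set B0 : ℝ := 3*(N:ℝ)+8 with hB0def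
  have hB00 : 0 < B0 := by rw [hB0def]; linarith
  set δ : ℝ := lam^(N+3) - ((s:ℝ)*A0) with hδdef
  have hδ : 0 < δ := by rw [hδdef, hA0def]; nlinarith
  set C1 : ℝ := (s:ℝ)*(B0 + K*A0 + K*B0) with hC1def
  have hC10 : 0 ≤ C1 := by rw [hC1def]; positivity
  -- choose m
  obtain ⟨m, hm1n, hmK, hmεe, hmδ⟩ :
      ∃ m : ℕ, 1 ≤ m ∧ K ≤ (m:ℝ) ∧ 2/ε ≤ (m:ℝ) ∧ C1 < δ*(m:ℝ) := by
    have hceil : K + 2/ε + C1/δ ≤ (⌈K + 2/ε + C1/δ⌉₊ : ℝ) := Nat.le_ceil _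
    have hc2ε : 0 < 2/ε := by positivity
    have hcδ : 0 ≤ C1/δ := by positivity
    refine ⟨⌈K + 2/ε + C1/δ⌉₊ + 1, by omega, by push_cast; linarith,
      by push_cast; linarith, ?_⟩
    push_cast
    have h2 : C1/δ < (⌈K + 2/ε + C1/δ⌉₊ : ℝ) + 1 := by linarith
    have h3 : C1 = (C1/δ)*δ := by field_simp
    nlinarith [mul_lt_mul_of_pos_right h2 hδ]
  have hm1 : (1:ℝ) ≤ (m:ℝ) := by exact_mod_cast hm1n
  have hm0 : (0:ℝ) < (m:ℝ) := by linarith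
  clear_value lam A0 K B0 δ C1
  -- choose t
  obtain ⟨t, ht1, ht2⟩ :
      ∃ t : ℕ, lam * (m:ℝ) ≤ (t:ℝ) ∧ (t:ℝ) < lam * (m:ℝ) + 1 :=
    ⟨⌈lam * (m:ℝ)⌉₊, Nat.le_ceil _, Nat.ceil_lt_add_one (by positivity)⟩
  have hlm0 : (0:ℝ) ≤ lam * (m:ℝ) := by positivity
  have hmt : m ≤ t := by
    have : (m:ℝ) ≤ (t:ℝ) := by nlinarith
    exact_mod_cast this
  have ht0 : (0:ℝ) ≤ (t:ℝ) := Nat.cast_nonneg t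
  refine ⟨t, m, hm1n, hmt, ?_, ?_⟩
  · -- main strict inequality
    have hAlow : lam^(N+3) * (m:ℝ)^(N+3) ≤ ∏ i ∈ range (N+3), ((t:ℝ) + i + 1) := by
      have h1 : (t:ℝ)^(N+3) ≤ ∏ i ∈ range (N+3), ((t:ℝ) + i + 1) := by
        calc (t:ℝ)^(N+3) = ∏ _i ∈ range (N+3), (t:ℝ) := by rw [prod_const, card_range]
          _ ≤ ∏ i ∈ range (N+3), ((t:ℝ) + i + 1) :=
            prod_le_prod (fun i _ => ht0) (fun i _ => by
              have : (0:ℝ) ≤ (i:ℝ) + 1 := by positivity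
              linarith)
      have h2 : lam^(N+3) * (m:ℝ)^(N+3) ≤ (t:ℝ)^(N+3) := by
        rw [← mul_pow]
        exact pow_le_pow_left₀ hlm0 ht1 _
      linarith
    have hBup : (∏ i ∈ range (N+2), ((m:ℝ) + i)) ≤ (m:ℝ)^(N+2) + K*(m:ℝ)^(N+1) := by
      have h1 : (∏ i ∈ range (N+2), ((m:ℝ) + i)) ≤ ∏ i ∈ range (N+2), ((m:ℝ) + i + 1) :=
        prod_le_prod (fun i _ => by positivity) (fun i _ => by linarith)
      have h2 := prodUB (m:ℝ) (N+1) (by push_cast; rw [hKdef] at hmK; linarith)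
      push_cast at h2
      rw [hKdef]
      linarith
    have hB0' : (0:ℝ) ≤ ∏ i ∈ range (N+2), ((m:ℝ) + i) :=
      prod_nonneg fun i _ => by positivity
    have hRup : ((N:ℝ)+3)*t - ((N:ℝ)+2)*m + (2*(N:ℝ)+5) ≤ A0*(m:ℝ) + B0 := by
      have h1 : ((N:ℝ)+3)*(t:ℝ) ≤ ((N:ℝ)+3)*(lam*(m:ℝ)+1) :=
        mul_le_mul_of_nonneg_left ht2.le (by linarith)
      rw [hA0def, hB0def]
      nlinarith
    have hR0 : (0:ℝ) ≤ ((N:ℝ)+3)*t - ((N:ℝ)+2)*m + (2*(N:ℝ)+5) := by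
      have hmt' : (m:ℝ) ≤ (t:ℝ) := by exact_mod_cast hmt
      nlinarith [mul_le_mul_of_nonneg_left hmt' hN0]
    have hBR : (∏ i ∈ range (N+2), ((m:ℝ) + i)) *
          (((N:ℝ)+3)*t - ((N:ℝ)+2)*m + (2*(N:ℝ)+5))
        ≤ ((m:ℝ)^(N+2) + K*(m:ℝ)^(N+1)) * (A0*(m:ℝ) + B0) := by
      refine mul_le_mul hBup hRup hR0 ?_
      positivity
    have hM10 : (0:ℝ) ≤ (m:ℝ)^(N+1) := by positivity
    have e1 : (m:ℝ)^(N+2) = (m:ℝ)^(N+1) * (m:ℝ) := by rw [pow_succ]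
    have e2 : (m:ℝ)^(N+3) = (m:ℝ)^(N+1) * (m:ℝ) * (m:ℝ) := by
      rw [pow_succ, pow_succ]
    calc (s:ℝ) * (∏ i ∈ range (N+2), ((m:ℝ) + i)) *
          (((N:ℝ)+3)*t - ((N:ℝ)+2)*m + (2*(N:ℝ)+5))
        ≤ (s:ℝ) * (((m:ℝ)^(N+2) + K*(m:ℝ)^(N+1)) * (A0*(m:ℝ) + B0)) := by
          rw [mul_assoc]
          exact mul_le_mul_of_nonneg_left hBR hs0
      _ ≤ (s:ℝ)*A0*((m:ℝ)^(N+1)*(m:ℝ)*(m:ℝ)) + C1*((m:ℝ)^(N+1)*(m:ℝ)) := by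
          rw [e1, hC1def]
          nlinarith [mul_nonneg (mul_nonneg (mul_nonneg hs0 hK0.le) hB00.le) hM10,
            mul_nonneg (mul_nonneg (mul_nonneg (mul_nonneg hs0 hK0.le) hB00.le) hM10)
              (sub_nonneg.2 hm1)]
      _ < (s:ℝ)*A0*((m:ℝ)^(N+1)*(m:ℝ)*(m:ℝ)) + δ*(m:ℝ)*((m:ℝ)^(N+1)*(m:ℝ)) := by
          have hpos : (0:ℝ) < (m:ℝ)^(N+1)*(m:ℝ) := by positivity
          have := mul_lt_mul_of_pos_right hmδ hpos
          linarith
      _ = lam^(N+3) * (m:ℝ)^(N+3) := by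
          have : lam^(N+3) = (s:ℝ)*A0 + δ := by rw [hδdef]; ring
          rw [this, e2]; ring
      _ ≤ ∏ i ∈ range (N+3), ((t:ℝ) + i + 1) := hAlow
  · -- ratio bound
    have hεm : (1:ℝ) ≤ (ε/2)*(m:ℝ) := by
      have h1 : (2/ε) * (ε/2) ≤ (m:ℝ) * (ε/2) :=
        mul_le_mul_of_nonneg_right hmεe (by positivity)
      have h2 : (2/ε) * (ε/2) = 1 := by field_simp
      linarith [h1, h2.symm.le]
    rw [div_lt_iff₀ hm0]
    have : (t:ℝ) < lam*(m:ℝ) + (ε/2)*(m:ℝ) := by linarith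
    rw [hlam] at this
    nlinarith

lemma pos_iff (N s m t : ℕ) (hm : 1 ≤ m) :
    (0 < (Nat.choose (t + (N+3)) (N+3) : ℤ) - (s : ℤ) *
        (((t : ℤ) + 1) * (Nat.choose (m + (N+3) - 2) ((N+3) - 1) : ℤ)
          - (((N+3 : ℕ) : ℤ) - 1) * (Nat.choose (m + (N+3) - 2) (N+3) : ℤ)))
    ↔ (s:ℝ) * (∏ i ∈ range (N+2), ((m:ℝ) + i)) *
        (((N:ℝ)+3)*t - ((N:ℝ)+2)*m + (2*(N:ℝ)+5))
      < ∏ i ∈ range (N+3), ((t:ℝ) + i + 1) := by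
  have hid := key_id N s m t hm
  have hfacZ : (0:ℤ) < (Nat.factorial (N+3) : ℤ) := by
    exact_mod_cast Nat.factorial_pos (N+3)
  constructor
  · intro h
    have h1 := mul_pos hfacZ h
    rw [hid] at h1
    have h2 : (0:ℝ) < (((∏ i ∈ range (N+3), ((t:ℤ) + i + 1))
        - (s:ℤ) * (∏ i ∈ range (N+2), ((m:ℤ) + i)) *
          (((N:ℤ)+3) * t - ((N:ℤ)+2) * m + (2*N+5)) : ℤ) : ℝ) := by exact_mod_cast h1
    push_cast at h2
    linarith
  · intro h
    have h2 : (0:ℝ) < (((∏ i ∈ range (N+3), ((t:ℤ) + i + 1))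
        - (s:ℤ) * (∏ i ∈ range (N+2), ((m:ℤ) + i)) *
          (((N:ℤ)+3) * t - ((N:ℤ)+2) * m + (2*N+5)) : ℤ) : ℝ) := by
      push_cast
      linarith
    have h1 : (0:ℤ) < (∏ i ∈ range (N+3), ((t:ℤ) + i + 1))
        - (s:ℤ) * (∏ i ∈ range (N+2), ((m:ℤ) + i)) *
          (((N:ℤ)+3) * t - ((N:ℤ)+2) * m + (2*N+5)) := by exact_mod_cast h2
    rw [← hid] at h1
    by_contra hc
    push_neg at hc
    nlinarith [mul_nonpos_of_nonneg_of_nonpos hfacZ.le hc]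


/-- For every integer `n ≥ 3` there exists `S` such that for all `s ≥ S`,
`inf{ t/m : t ≥ m ≥ 1, C(t+n, n) − s·((t+1)·C(m+n−2, n−1) − (n−1)·C(m+n−2, n)) > 0 }`
equals `g_{n,1,s}`, the unique real root `≥ 1` of `x^n − n·s·x + (n−1)·s`;
i.e. `e_{n,1,s} = g_{n,1,s}` for all sufficiently large `s`. -/
theorem stmt_11 (n : ℕ) (hn : 3 ≤ n) :
    ∃ S : ℕ, ∀ s : ℕ, S ≤ s →
      ∀ g : ℝ, 1 ≤ g → g ^ n - (n : ℝ) * (s : ℝ) * g + ((n : ℝ) - 1) * (s : ℝ) = 0 →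
        sInf {x : ℝ | ∃ t m : ℕ, 1 ≤ m ∧ m ≤ t ∧
            0 < (Nat.choose (t + n) n : ℤ) - (s : ℤ) *
              (((t : ℤ) + 1) * (Nat.choose (m + n - 2) (n - 1) : ℤ)
                - ((n : ℤ) - 1) * (Nat.choose (m + n - 2) n : ℤ)) ∧
            x = (t : ℝ) / (m : ℝ)}
          = g := by
  obtain ⟨N, rfl⟩ : ∃ N, n = N + 3 := ⟨n - 3, by omega⟩
  refine ⟨(N+3)^(4*(N+3)), ?_⟩
  intro s hs g hg1 hroot
  have hs2n : 2 ≤ s := sbig N s hs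
  have hs2 : (2:ℝ) ≤ (s:ℝ) := by exact_mod_cast hs2n
  have root : g^(N+3) - ((N:ℝ)+3)*(s:ℝ)*g + ((N:ℝ)+2)*(s:ℝ) = 0 := by
    push_cast at hroot
    linear_combination hroot
  have ha : ∀ x ∈ {x : ℝ | ∃ t m : ℕ, 1 ≤ m ∧ m ≤ t ∧
      0 < (Nat.choose (t + (N+3)) (N+3) : ℤ) - (s : ℤ) *
        (((t : ℤ) + 1) * (Nat.choose (m + (N+3) - 2) ((N+3) - 1) : ℤ)
          - (((N+3:ℕ) : ℤ) - 1) * (Nat.choose (m + (N+3) - 2) (N+3) : ℤ)) ∧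
      x = (t : ℝ) / (m : ℝ)}, g ≤ x := by
    rintro x ⟨t, m, hm, hmt, hpos, rfl⟩
    have hm0 : (0:ℝ) < (m:ℝ) := by
      have : 0 < m := by omega
      exact_mod_cast this
    by_contra hcon
    push_neg at hcon
    have hlt : (t:ℝ) < g * m := by
      rw [div_lt_iff₀ hm0] at hcon
      linarith
    have hA := partA N s m t g hs hm hmt hg1 root hlt
    have hstrict := (pos_iff N s m t hm).1 hpos
    linarith
  have hb : ∀ ε : ℝ, 0 < ε → ∃ x ∈ {x : ℝ | ∃ t m : ℕ, 1 ≤ m ∧ m ≤ t ∧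
      0 < (Nat.choose (t + (N+3)) (N+3) : ℤ) - (s : ℤ) *
        (((t : ℤ) + 1) * (Nat.choose (m + (N+3) - 2) ((N+3) - 1) : ℤ)
          - (((N+3:ℕ) : ℤ) - 1) * (Nat.choose (m + (N+3) - 2) (N+3) : ℤ)) ∧
      x = (t : ℝ) / (m : ℝ)}, x < g + ε := by
    intro ε hε
    obtain ⟨t, m, hm, hmt, hlt, hratio⟩ := partB N s g hs2n hg1 root ε hε
    exact ⟨(t:ℝ)/(m:ℝ), ⟨t, m, hm, hmt, (pos_iff N s m t hm).2 hlt, rfl⟩, hratio⟩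
  have hne : Set.Nonempty {x : ℝ | ∃ t m : ℕ, 1 ≤ m ∧ m ≤ t ∧
      0 < (Nat.choose (t + (N+3)) (N+3) : ℤ) - (s : ℤ) *
        (((t : ℤ) + 1) * (Nat.choose (m + (N+3) - 2) ((N+3) - 1) : ℤ)
          - (((N+3:ℕ) : ℤ) - 1) * (Nat.choose (m + (N+3) - 2) (N+3) : ℤ)) ∧
      x = (t : ℝ) / (m : ℝ)} := by
    obtain ⟨x, hx, _⟩ := hb 1 one_pos
    exact ⟨x, hx⟩
  have hbdd : BddBelow {x : ℝ | ∃ t m : ℕ, 1 ≤ m ∧ m ≤ t ∧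
      0 < (Nat.choose (t + (N+3)) (N+3) : ℤ) - (s : ℤ) *
        (((t : ℤ) + 1) * (Nat.choose (m + (N+3) - 2) ((N+3) - 1) : ℤ)
          - (((N+3:ℕ) : ℤ) - 1) * (Nat.choose (m + (N+3) - 2) (N+3) : ℤ)) ∧
      x = (t : ℝ) / (m : ℝ)} := ⟨g, ha⟩
  exact le_antisymm ((Real.sInf_le_iff hbdd hne).2 hb) (le_csInf hne ha)
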